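/- Let (Λ,d) be a 2-graph satisfying condition (3.1). Then every vertex v lies on exactly one isolated cycle in the red graph, v is the range of exactly one red edge and the source of exactly one red edge, and Λ is locally convex: whenever e is a blue edge and f is a red edge with r(e) = r(f), there exist a red edge f' with r(f') = s(e) and a blue edge e' with r(e') = s(f). -/

import Mathlib

open scoped ENNReal

/-- A rank-2 graph (`2`-graph): a countable category whose morphisms (paths) carry a
degree functor `d : Path → ℕ × ℕ` satisfying the unique factorisation property.
Vertices are identified with the paths of degree `(0,0)`; composition is a total
function whose behaviour is constrained only on composable pairs (`s p = r q`). -/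
structure TwoGraph where
  Path : Type
  countable : Countable Path
  d : Path → ℕ × ℕ
  r : Path → Path
  s : Path → Path
  comp : Path → Path → Path
  d_r : ∀ p, d (r p) = 0
  d_s : ∀ p, d (s p) = 0
  r_vertex : ∀ p, d p = 0 → r p = p
  s_vertex : ∀ p, d p = 0 → s p = p
  id_comp : ∀ p, comp (r p) p = p
  comp_id : ∀ p, comp p (s p) = p
  r_comp : ∀ p q, s p = r q → r (comp p q) = r p
  s_comp : ∀ p q, s p = r q → s (comp p q) = s q
  d_comp : ∀ p q, s p = r q → d (comp p q) = d p + d q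
  comp_assoc : ∀ p q t, s p = r q → s q = r t → comp (comp p q) t = comp p (comp q t)
  factor : ∀ (lam : Path) (m n : ℕ × ℕ), d lam = m + n →
    ∃! mn : Path × Path,
      d mn.1 = m ∧ d mn.2 = n ∧ s mn.1 = r mn.2 ∧ comp mn.1 mn.2 = lam

namespace TwoGraph

variable (G : TwoGraph)

/-- Vertices are the paths of degree `0`. -/
def IsVertex (p : G.Path) : Prop := G.d p = 0

/-- A blue path: one whose degree lies in `ℕ e₁`. -/
def IsBlue (p : G.Path) : Prop := (G.d p).2 = 0

/-- A red path: one whose degree lies in `ℕ e₂`. -/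
def IsRed (p : G.Path) : Prop := (G.d p).1 = 0

/-- A blue edge: a path of degree `e₁ = (1,0)`. -/
def IsBlueEdge (p : G.Path) : Prop := G.d p = (1, 0)

/-- A red edge: a path of degree `e₂ = (0,1)`. -/
def IsRedEdge (p : G.Path) : Prop := G.d p = (0, 1)

/-- `Λ` is row-finite: `vΛⁿ` is finite for every vertex `v` and degree `n`. -/
def RowFinite : Prop :=
  ∀ (v : G.Path) (n : ℕ × ℕ), G.IsVertex v →
    {p : G.Path | G.r p = v ∧ G.d p = n}.Finite

/-- `Λ` is a finite `2`-graph: `Λⁿ` is finite for every degree `n`. -/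
def FinitePaths : Prop := ∀ n : ℕ × ℕ, {p : G.Path | G.d p = n}.Finite

/-- `μ` is an initial segment of `lam`, i.e. `lam = μ ν` for some `ν`. -/
def InitSeg (μ lam : G.Path) : Prop := ∃ ν, G.s μ = G.r ν ∧ G.comp μ ν = lam

/-- `μ` is a final segment of `lam`, i.e. `lam = ν μ` for some `ν`. -/
def FinalSeg (μ lam : G.Path) : Prop := ∃ ν, G.s ν = G.r μ ∧ G.comp ν μ = lam

/-- The vertex `v` lies on the path `lam`, i.e. `v = lam(n)` for some `0 ≤ n ≤ d lam`. -/
def OnPath (lam v : G.Path) : Prop :=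
  G.IsVertex v ∧ ∃ μ, G.InitSeg μ lam ∧ G.s μ = v

/-- A cycle: `d lam ≠ 0`, `r lam = s lam`, and `lam(n) ≠ s lam` for `0 < n < d lam`. -/
def IsCycle (lam : G.Path) : Prop :=
  G.d lam ≠ 0 ∧ G.r lam = G.s lam ∧
    ∀ μ, G.InitSeg μ lam → G.d μ ≠ 0 → G.d μ ≠ G.d lam → G.s μ ≠ G.s lam

/-- `lam` has no entrance: for `n ≤ d lam`, every path of degree `n` with range `r lam`
is the initial segment `lam(0,n)`. -/
def HasNoEntrance (lam : G.Path) : Prop :=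
  ∀ n : ℕ × ℕ, n ≤ G.d lam → ∀ μ, G.d μ = n → G.r μ = G.r lam → G.InitSeg μ lam

/-- `lam` has no exit: for `n ≤ d lam`, every path of degree `n` with source `s lam`
is the final segment `lam(d lam - n, d lam)`. -/
def HasNoExit (lam : G.Path) : Prop :=
  ∀ n : ℕ × ℕ, n ≤ G.d lam → ∀ μ, G.d μ = n → G.s μ = G.s lam → G.FinalSeg μ lam

/-- An isolated cycle: no entrances and no exits. -/
def IsIsolated (lam : G.Path) : Prop := G.HasNoEntrance lam ∧ G.HasNoExit lam

/-- An isolated cycle in the red graph. -/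
def IsIsolatedRedCycle (lam : G.Path) : Prop :=
  G.IsRed lam ∧ G.IsCycle lam ∧ G.IsIsolated lam

/-- Condition (3.1): `Λ` is row-finite, the blue graph contains no cycles, and each
vertex is the range of an isolated cycle in the red graph. -/
def Cond31 : Prop :=
  G.RowFinite ∧ (∀ p, G.IsBlue p → ¬ G.IsCycle p) ∧
    ∀ v, G.IsVertex v → ∃ lam, G.IsIsolatedRedCycle lam ∧ G.r lam = v

/-- A source of the blue graph: a vertex receiving no blue edges. -/
def IsBlueSource (v : G.Path) : Prop :=
  G.IsVertex v ∧ ∀ e, G.IsBlueEdge e → G.r e ≠ v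

/-- A sink of the blue graph: a vertex emitting no blue edges. -/
def IsBlueSink (v : G.Path) : Prop :=
  G.IsVertex v ∧ ∀ e, G.IsBlueEdge e → G.s e ≠ v

/-- `Λ^{≤ n}`. -/
def LeSet (n : ℕ × ℕ) : Set G.Path :=
  {lam | G.d lam ≤ n ∧
    ∀ μ, G.s lam = G.r μ → G.comp lam μ ≠ lam → ¬ G.d (G.comp lam μ) ≤ n}

/-- `IsSwap ρ τ τ' ρ'` says that `(τ', ρ') = 𝓕(ρ, τ)` is the factorisation of `ρτ`
with the degrees in the reversed order: `τ'ρ' = ρτ`, `d τ' = d τ` and `d ρ' = d ρ`. -/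
def IsSwap (ρ τ τ' ρ' : G.Path) : Prop :=
  G.s ρ = G.r τ ∧ G.s τ' = G.r ρ' ∧ G.d τ' = G.d τ ∧ G.d ρ' = G.d ρ ∧
    G.comp τ' ρ' = G.comp ρ τ

/-- The edge `e` occurs at position `n` in the red path `μ`. -/
def OccAt (μ e : G.Path) (n : ℕ) : Prop :=
  ∃ ρ ξ, G.d ρ = (0, n) ∧ G.s ρ = G.r e ∧ G.s e = G.r ξ ∧
    G.comp ρ (G.comp e ξ) = μ

/-- `⟨μ, e⟩`: the number of occurrences of the red edge `e` in the red path `μ`. -/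
noncomputable def occCount (μ e : G.Path) : ℕ :=
  Nat.card {n : ℕ // G.OccAt μ e n}

/-- Membership in `Y = (blue Λ)S`: a blue path whose source is a source of the
blue graph. -/
def InY (α : G.Path) : Prop := G.IsBlue α ∧ G.IsBlueSource (G.s α)

/-- One step of the factorisation permutation `𝓕` of the blue paths of a GBD:
`α' = 𝓕(α)` iff `f α = α' f'` for (the) red edges `f, f'` with `s f = r α`. -/
def FStep (α α' : G.Path) : Prop :=
  G.IsBlue α ∧ G.IsBlue α' ∧
    ∃ f f', G.IsRedEdge f ∧ G.IsRedEdge f' ∧ G.s f = G.r α ∧ G.s α' = G.r f' ∧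
      G.comp f α = G.comp α' f'

end TwoGraph

/-- `k`-fold iteration of the factorisation permutation, as a relation. -/
def TwoGraph.FIter (G : TwoGraph) : ℕ → G.Path → G.Path → Prop
  | 0, α, α' => α = α'
  | k + 1, α, α' => ∃ β, G.FStep α β ∧ TwoGraph.FIter G k β α'

namespace TwoGraph

variable (G : TwoGraph)

/-- `o(α) = k`: `k` is the order of the blue path `α` under the factorisation
permutation `𝓕`. -/
def HasOrder (α : G.Path) (k : ℕ) : Prop :=
  0 < k ∧ G.FIter k α α ∧ ∀ m, 0 < m → m < k → ¬ G.FIter m α α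

end TwoGraph

/-- `IsChainComp [e₁, …, eₙ] β` says `β = e₁ e₂ ⋯ eₙ`. -/
def TwoGraph.IsChainComp (G : TwoGraph) : List G.Path → G.Path → Prop
  | [], β => G.IsVertex β
  | e :: l, β => ∃ γ, TwoGraph.IsChainComp G l γ ∧ G.s e = G.r γ ∧ β = G.comp e γ

/-- `cyclePow lam m = lam^m`, the `m`-fold concatenation of the cycle `lam`,
with `lam^0 = s lam`. -/
def TwoGraph.cyclePow (G : TwoGraph) (lam : G.Path) : ℕ → G.Path
  | 0 => G.s lam
  | m + 1 => G.comp lam (TwoGraph.cyclePow G lam m)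

namespace TwoGraph

variable (G : TwoGraph)

/-! ### Relative (sub-2-graph) versions of the basic notions -/

/-- `μ` is an initial segment of `lam` within `P`. -/
def InitSegIn (P : Set G.Path) (μ lam : G.Path) : Prop :=
  ∃ ν ∈ P, G.s μ = G.r ν ∧ G.comp μ ν = lam

/-- `μ` is a final segment of `lam` within `P`. -/
def FinalSegIn (P : Set G.Path) (μ lam : G.Path) : Prop :=
  ∃ ν ∈ P, G.s ν = G.r μ ∧ G.comp ν μ = lam

/-- A cycle of the sub-2-graph with path-set `P`. -/
def IsCycleIn (P : Set G.Path) (lam : G.Path) : Prop :=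
  lam ∈ P ∧ G.d lam ≠ 0 ∧ G.r lam = G.s lam ∧
    ∀ μ ∈ P, G.InitSegIn P μ lam → G.d μ ≠ 0 → G.d μ ≠ G.d lam → G.s μ ≠ G.s lam

def HasNoEntranceIn (P : Set G.Path) (lam : G.Path) : Prop :=
  ∀ n : ℕ × ℕ, n ≤ G.d lam → ∀ μ ∈ P, G.d μ = n → G.r μ = G.r lam → G.InitSegIn P μ lam

def HasNoExitIn (P : Set G.Path) (lam : G.Path) : Prop :=
  ∀ n : ℕ × ℕ, n ≤ G.d lam → ∀ μ ∈ P, G.d μ = n → G.s μ = G.s lam → G.FinalSegIn P μ lam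

/-- An isolated cycle of the red graph of the sub-2-graph with path-set `P`. -/
def IsIsolatedRedCycleIn (P : Set G.Path) (lam : G.Path) : Prop :=
  lam ∈ P ∧ G.IsRed lam ∧ G.IsCycleIn P lam ∧
    G.HasNoEntranceIn P lam ∧ G.HasNoExitIn P lam

def RowFiniteIn (P : Set G.Path) : Prop :=
  ∀ (v : G.Path) (n : ℕ × ℕ), G.IsVertex v →
    {p : G.Path | p ∈ P ∧ G.r p = v ∧ G.d p = n}.Finite

/-- A source of the blue graph of the sub-2-graph with path-set `P`. -/
def IsBlueSourceIn (P : Set G.Path) (v : G.Path) : Prop :=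
  v ∈ P ∧ G.IsVertex v ∧ ∀ e ∈ P, G.IsBlueEdge e → G.r e ≠ v

/-- Condition (3.1) for the sub-2-graph with path-set `P`. -/
def Cond31In (P : Set G.Path) : Prop :=
  G.RowFiniteIn P ∧ (∀ p ∈ P, G.IsBlue p → ¬ G.IsCycleIn P p) ∧
    ∀ v ∈ P, G.IsVertex v → ∃ lam, G.IsIsolatedRedCycleIn P lam ∧ G.r lam = v

/-- `Λ_j = {λ ∈ Λ : s(λ) Λ W ≠ ∅}`: the paths admitting a path from their source
into the vertex set `W`. -/
def subGraphTo (W : Set G.Path) : Set G.Path :=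
  {p | ∃ μ, G.r μ = G.s p ∧ G.s μ ∈ W}

/-- `Λ` has large-permutation factorisations. -/
def HasLPF : Prop :=
  ∀ v, G.IsVertex v → ∀ l : ℕ, 0 < l → ∃ N : ℕ,
    ∀ α, G.IsBlue α → G.r α = v → G.d α = (N, 0) →
      ∀ k, G.HasOrder α k → l < k

end TwoGraph

/-- A generalised Bratteli diagram of depth `N ∈ ℕ ∪ {∞}` with vertex decomposition
`Λ⁰ = ⊔ₙ V n`. -/
structure IsGBD (G : TwoGraph) (N : ℕ∞) (V : ℕ → Set G.Path) : Prop where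
  rowFinite : G.RowFinite
  level_nonempty : ∀ n : ℕ, (n : ℕ∞) ≤ N → (V n).Nonempty
  level_finite : ∀ n : ℕ, (V n).Finite
  level_empty : ∀ n : ℕ, ¬ ((n : ℕ∞) ≤ N) → V n = ∅
  level_vertex : ∀ n, V n ⊆ {v | G.IsVertex v}
  cover : ∀ v, G.IsVertex v → ∃ n, v ∈ V n
  level_disjoint : ∀ m n, m ≠ n → Disjoint (V m) (V n)
  blue_level : ∀ e, G.IsBlueEdge e → ∃ n, G.r e ∈ V n ∧ G.s e ∈ V (n + 1)
  sinks_bottom : ∀ v, G.IsBlueSink v → v ∈ V 0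
  sources_top : ∀ v, G.IsBlueSource v → ∃ n : ℕ, (n : ℕ∞) = N ∧ v ∈ V n
  red_cycle : ∀ v, G.IsVertex v → ∃ lam, G.IsIsolatedRedCycle lam ∧ G.r lam = v
  red_level : ∀ f, G.IsRedEdge f → ∃ n, G.r f ∈ V n ∧ G.s f ∈ V n

/-- The sub-2-graph `Λ_N` of paths joining vertices in the first `N` levels. -/
def levelPaths (G : TwoGraph) (V : ℕ → Set G.Path) (N : ℕ) : Set G.Path :=
  {p | (∃ n ≤ N, G.r p ∈ V n) ∧ (∃ n ≤ N, G.s p ∈ V n)}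

/-- An infinite path in a 2-graph: a degree-preserving functor `Ω₂ → Λ`, recorded by
its segments `x(m,n)` for `m ≤ n` in `ℕ × ℕ`. -/
structure InfPath (G : TwoGraph) where
  seg : ℕ × ℕ → ℕ × ℕ → G.Path
  deg : ∀ m n : ℕ × ℕ, m ≤ n → G.d (seg m n) = n - m
  range_seg : ∀ m n : ℕ × ℕ, m ≤ n → G.r (seg m n) = seg m m
  source_seg : ∀ m n : ℕ × ℕ, m ≤ n → G.s (seg m n) = seg n n
  comp_seg : ∀ m n p : ℕ × ℕ, m ≤ n → n ≤ p → G.comp (seg m n) (seg n p) = seg m p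

/-- A Cuntz–Krieger `Λ`-family in a C*-algebra `A`. -/
structure CKFamily (G : TwoGraph) (A : Type*) [CStarAlgebra A] where
  S : G.Path → A
  ck1_sa : ∀ v, G.IsVertex v → star (S v) = S v
  ck1_idem : ∀ v, G.IsVertex v → S v * S v = S v
  ck1_orth : ∀ v w, G.IsVertex v → G.IsVertex w → v ≠ w → S v * S w = 0
  ck2 : ∀ p q, G.s p = G.r q → S p * S q = S (G.comp p q)
  ck3 : ∀ p, star (S p) * S p = S (G.s p)
  ck4 : ∀ (v : G.Path) (n : ℕ × ℕ), G.IsVertex v →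
    S v = ∑ᶠ lam ∈ {lam : G.Path | lam ∈ G.LeSet n ∧ G.r lam = v},
      S lam * star (S lam)

section CStar

variable {A : Type*} [CStarAlgebra A]

/-- The C*-subalgebra (as a subset) of `A` generated by a set `SS`. -/
def generatedCStar (SS : Set A) : Set A :=
  closure (NonUnitalStarAlgebra.adjoin ℂ SS : Set A)

/-- `P` is full in the C*-algebra `Bset ⊆ A`: every closed two-sided ideal of `Bset`
containing `P` is all of `Bset`. -/
def FullIn (Bset : Set A) (P : A) : Prop :=
  ∀ I : Set A, I ⊆ Bset → IsClosed I →
    (∀ x ∈ I, ∀ y ∈ I, x + y ∈ I) → (∀ (c : ℂ), ∀ x ∈ I, c • x ∈ I) →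
    (∀ a ∈ Bset, ∀ x ∈ I, a * x ∈ I ∧ x * a ∈ I) →
    P ∈ I → Bset ⊆ I

/-- The sum `∑_{v ∈ Λ⁰} s_v`, which is the unit of `C*(Λ)` for finite `Λ`. -/
noncomputable def ckUnit (G : TwoGraph) (F : CKFamily G A) : A :=
  ∑ᶠ v ∈ {v : G.Path | G.IsVertex v}, F.S v

/-- The canonical unitary `U = ∑_{α ∈ Y} s_α s_{λ(α)} s_α*`. -/
noncomputable def ckU (G : TwoGraph) (F : CKFamily G A) (lam : G.Path → G.Path) : A :=
  ∑ᶠ α ∈ {α : G.Path | G.InY α}, F.S α * F.S (lam α) * star (F.S α)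

/-- The gauge action: for every `z ∈ 𝕋²` there is a *-automorphism `γ_z` of the
C*-subalgebra generated by the family with `γ_z(s_λ) = z^{d(λ)} s_λ`. -/
def GaugeInvariant (G : TwoGraph) (F : CKFamily G A) : Prop :=
  ∀ z₁ z₂ : ℂ, ‖z₁‖ = 1 → ‖z₂‖ = 1 → ∃ γ : A → A,
    Set.BijOn γ (generatedCStar (Set.range F.S)) (generatedCStar (Set.range F.S)) ∧
    (∀ x ∈ generatedCStar (Set.range F.S), ∀ y ∈ generatedCStar (Set.range F.S),
      γ (x + y) = γ x + γ y ∧ γ (x * y) = γ x * γ y) ∧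
    (∀ x ∈ generatedCStar (Set.range F.S), γ (star x) = star (γ x)) ∧
    (∀ (c : ℂ), ∀ x ∈ generatedCStar (Set.range F.S), γ (c • x) = c • γ x) ∧
    (∀ p : G.Path, γ (F.S p) = (z₁ ^ (G.d p).1 * z₂ ^ (G.d p).2) • F.S p)

end CStar


namespace TwoGraph

variable (G : TwoGraph)

lemma red_snd_pos {lam : G.Path} (hred : G.IsRed lam) (h0 : G.d lam ≠ 0) :
    1 ≤ (G.d lam).2 := by
  rcases Nat.eq_zero_or_pos (G.d lam).2 with h | h
  · exact absurd (Prod.ext_iff.mpr ⟨by simpa using (show (G.d lam).1 = 0 from hred), by simpa using h⟩) h0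
  · exact h

lemma existsUnique_red_edge_range (h31 : G.Cond31) (v : G.Path) (hv : G.IsVertex v) :
    ∃! f, G.IsRedEdge f ∧ G.r f = v := by
  obtain ⟨lam, ⟨hred, hcyc, hiso⟩, hrv⟩ := h31.2.2 v hv
  have hk := G.red_snd_pos hred hcyc.1
  have hdeq : G.d lam = (0, 1) + (0, (G.d lam).2 - 1) := by
    have h1 : (G.d lam).1 = 0 := hred
    rw [Prod.ext_iff]
    refine ⟨by simpa using h1, by simp; omega⟩
  obtain ⟨⟨f₀, rest⟩, ⟨hd1, hd2, hsr, hcomp⟩, huniq⟩ :=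
    G.factor lam (0, 1) (0, (G.d lam).2 - 1) hdeq
  have hrf₀ : G.r f₀ = v := by
    have h := G.r_comp f₀ rest hsr
    rw [hcomp] at h
    rw [← h]; exact hrv
  refine ⟨f₀, ⟨hd1, hrf₀⟩, ?_⟩
  rintro f ⟨hfred, hfr⟩
  obtain ⟨ν, hsν, hcompν⟩ := hiso.1 (0, 1)
    (by rw [Prod.le_def]; exact ⟨by simp, by simpa using hk⟩)
    f hfred (by rw [hfr, hrv])
  have hdν : G.d ν = (0, (G.d lam).2 - 1) := by
    have h := G.d_comp f ν hsν
    rw [hcompν, hfred] at h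
    have h1 : (G.d lam).1 = 0 := hred
    rw [Prod.ext_iff] at h ⊢
    simp only [Prod.fst_add, Prod.snd_add] at h
    simp at h ⊢
    omega
  have := huniq (f, ν) ⟨hfred, hdν, hsν, hcompν⟩
  exact congrArg Prod.fst this

lemma existsUnique_red_edge_source (h31 : G.Cond31) (v : G.Path) (hv : G.IsVertex v) :
    ∃! f, G.IsRedEdge f ∧ G.s f = v := by
  obtain ⟨lam, ⟨hred, hcyc, hiso⟩, hrv⟩ := h31.2.2 v hv
  have hsv : G.s lam = v := by rw [← hcyc.2.1]; exact hrv
  have hk := G.red_snd_pos hred hcyc.1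
  have hdeq : G.d lam = (0, (G.d lam).2 - 1) + (0, 1) := by
    have h1 : (G.d lam).1 = 0 := hred
    rw [Prod.ext_iff]
    refine ⟨by simpa using h1, by simp; omega⟩
  obtain ⟨⟨rest, f₀⟩, ⟨hd1, hd2, hsr, hcomp⟩, huniq⟩ :=
    G.factor lam (0, (G.d lam).2 - 1) (0, 1) hdeq
  have hsf₀ : G.s f₀ = v := by
    have h := G.s_comp rest f₀ hsr
    rw [hcomp] at h
    rw [← h]; exact hsv
  refine ⟨f₀, ⟨hd2, hsf₀⟩, ?_⟩
  rintro f ⟨hfred, hfs⟩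
  obtain ⟨ν, hsν, hcompν⟩ := hiso.2 (0, 1)
    (by rw [Prod.le_def]; exact ⟨by simp, by simpa using hk⟩)
    f hfred (by rw [hfs, hsv])
  have hdν : G.d ν = (0, (G.d lam).2 - 1) := by
    have h := G.d_comp ν f hsν
    rw [hcompν, hfred] at h
    have h1 : (G.d lam).1 = 0 := hred
    rw [Prod.ext_iff] at h ⊢
    simp only [Prod.fst_add, Prod.snd_add] at h
    simp at h ⊢
    omega
  have := huniq (ν, f) ⟨hdν, hfred, hsν, hcompν⟩
  exact congrArg Prod.snd this

lemma red_path_unique (h31 : G.Cond31) :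
    ∀ m (p q : G.Path), G.d p = (0, m) → G.d q = (0, m) → G.r p = G.r q → p = q := by
  intro m
  induction m with
  | zero =>
    intro p q hp hq hr
    have hp0 : G.d p = 0 := by rw [hp]; rfl
    have hq0 : G.d q = 0 := by rw [hq]; rfl
    rw [← G.r_vertex p hp0, ← G.r_vertex q hq0, hr]
  | succ m ih =>
    intro p q hp hq hr
    have hpd : G.d p = (0, 1) + (0, m) := by
      rw [hp, Prod.ext_iff]; constructor <;> simp; omega
    have hqd : G.d q = (0, 1) + (0, m) := by
      rw [hq, Prod.ext_iff]; constructor <;> simp; omega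
    obtain ⟨⟨p₁, p₂⟩, ⟨hpd1, hpd2, hps, hpc⟩, _⟩ := G.factor p (0, 1) (0, m) hpd
    obtain ⟨⟨q₁, q₂⟩, ⟨hqd1, hqd2, hqs, hqc⟩, _⟩ := G.factor q (0, 1) (0, m) hqd
    have hrp₁ : G.r p₁ = G.r p := by
      have h := G.r_comp p₁ p₂ hps; rw [hpc] at h; exact h.symm
    have hrq₁ : G.r q₁ = G.r q := by
      have h := G.r_comp q₁ q₂ hqs; rw [hqc] at h; exact h.symm
    have hv : G.IsVertex (G.r p) := G.d_r p
    have h1 : p₁ = q₁ := by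
      obtain ⟨g, hg, hu⟩ := G.existsUnique_red_edge_range h31 (G.r p) hv
      rw [hu p₁ ⟨hpd1, hrp₁⟩, hu q₁ ⟨hqd1, by rw [hrq₁, ← hr]⟩]
    have h2 : p₂ = q₂ := ih p₂ q₂ hpd2 hqd2 (by rw [← hps, ← hqs, h1])
    rw [← hpc, ← hqc, h1, h2]

lemma red_cycle_unique_of_le (h31 : G.Cond31) {lam lam' : G.Path}
    (hred : G.IsRed lam) (hred' : G.IsRed lam')
    (hcyc : G.IsCycle lam) (hcyc' : G.IsCycle lam')
    (hr : G.r lam = G.r lam') (hle : (G.d lam).2 ≤ (G.d lam').2) : lam = lam' := by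
  rcases eq_or_lt_of_le hle with heq | hlt
  · refine G.red_path_unique h31 (G.d lam').2 lam lam' ?_ ?_ hr
    · exact Prod.ext_iff.mpr ⟨hred, heq⟩
    · exact Prod.ext_iff.mpr ⟨hred', rfl⟩
  · exfalso
    have h1 : (G.d lam').1 = 0 := hred'
    have hdeq : G.d lam' = (0, (G.d lam).2) + (0, (G.d lam').2 - (G.d lam).2) := by
      rw [Prod.ext_iff]
      refine ⟨by simpa using h1, by simp; omega⟩
    obtain ⟨⟨μ, ν⟩, ⟨hd1, hd2, hsν, hcompν⟩, _⟩ := G.factor lam' _ _ hdeq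
    have hμ : μ = lam := by
      refine G.red_path_unique h31 (G.d lam).2 μ lam hd1 (Prod.ext_iff.mpr ⟨hred, rfl⟩) ?_
      have h := G.r_comp μ ν hsν; rw [hcompν] at h; rw [← h, hr]
    subst hμ
    have hne := hcyc'.2.2 μ ⟨ν, hsν, hcompν⟩ hcyc.1
      (by intro h; exact absurd (congrArg Prod.snd h) hlt.ne)
    apply hne
    rw [← hcyc.2.1, ← hcyc'.2.1, hr]

lemma existsUnique_isolated_red_cycle (h31 : G.Cond31) (v : G.Path) (hv : G.IsVertex v) :
    ∃! lam, G.IsIsolatedRedCycle lam ∧ G.r lam = v := by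
  obtain ⟨lam, hlam, hr⟩ := h31.2.2 v hv
  refine ⟨lam, ⟨hlam, hr⟩, ?_⟩
  rintro lam' ⟨⟨hred', hcyc', _⟩, hr'⟩
  obtain ⟨hred, hcyc, _⟩ := hlam
  rcases le_total (G.d lam').2 (G.d lam).2 with h | h
  · exact G.red_cycle_unique_of_le h31 hred' hred hcyc' hcyc (by rw [hr', hr]) h
  · exact (G.red_cycle_unique_of_le h31 hred hred' hcyc hcyc' (by rw [hr', hr]) h).symm

lemma blue_into_source (h31 : G.Cond31) {e f : G.Path} (he : G.IsBlueEdge e)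
    (hf : G.IsRedEdge f) (hre : G.r e = G.r f) :
    ∃ e', G.IsBlueEdge e' ∧ G.r e' = G.s f := by
  have hv : G.IsVertex (G.r f) := G.d_r f
  obtain ⟨lam, ⟨hred, hcyc, hiso⟩, hrv⟩ := h31.2.2 (G.r f) hv
  have hk := G.red_snd_pos hred hcyc.1
  have h1 : (G.d lam).1 = 0 := hred
  have hdeq : G.d lam = (0, 1) + (0, (G.d lam).2 - 1) := by
    rw [Prod.ext_iff]
    refine ⟨by simpa using h1, by simp; omega⟩
  obtain ⟨⟨f₀, rest⟩, ⟨hd1, hd2, hsr, hcomp⟩, _⟩ :=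
    G.factor lam (0, 1) (0, (G.d lam).2 - 1) hdeq
  have hrf₀ : G.r f₀ = G.r f := by
    have h := G.r_comp f₀ rest hsr
    rw [hcomp] at h
    rw [← h, hrv]
  have hf₀ : f₀ = f := by
    obtain ⟨g, hg, hu⟩ := G.existsUnique_red_edge_range h31 (G.r f) hv
    rw [hu f₀ ⟨hd1, hrf₀⟩, hu f ⟨hf, rfl⟩]
  have hsrest : G.s rest = G.r e := by
    have h := G.s_comp f₀ rest hsr
    rw [hcomp] at h
    rw [← h, ← hcyc.2.1, hrv, hre]
  have hdμ : G.d (G.comp rest e) = (1, 0) + (0, (G.d lam).2 - 1) := by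
    rw [G.d_comp rest e hsrest, hd2, he, Prod.ext_iff]
    constructor <;> simp
  obtain ⟨⟨e', τ⟩, ⟨hde', hdτ, hsτ, hcτ⟩, _⟩ :=
    G.factor (G.comp rest e) (1, 0) (0, (G.d lam).2 - 1) hdμ
  refine ⟨e', hde', ?_⟩
  have h := G.r_comp e' τ hsτ
  rw [hcτ] at h
  have h2 := G.r_comp rest e hsrest
  rw [← h, h2, ← hsr, hf₀]

end TwoGraph

/-- In a 2-graph satisfying condition (3.1), every vertex lies on
exactly one isolated red cycle, is the range of exactly one red edge and the source of
exactly one red edge, and the 2-graph is locally convex. -/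
theorem stmt0 (G : TwoGraph) (h31 : G.Cond31) :
    (∀ v, G.IsVertex v →
      (∃! lam, G.IsIsolatedRedCycle lam ∧ G.r lam = v) ∧
      (∃! f, G.IsRedEdge f ∧ G.r f = v) ∧
      (∃! f, G.IsRedEdge f ∧ G.s f = v)) ∧
    (∀ e f, G.IsBlueEdge e → G.IsRedEdge f → G.r e = G.r f →
      (∃ f', G.IsRedEdge f' ∧ G.r f' = G.s e) ∧
      (∃ e', G.IsBlueEdge e' ∧ G.r e' = G.s f)) := by
  refine ⟨fun v hv => ⟨G.existsUnique_isolated_red_cycle h31 v hv,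
    G.existsUnique_red_edge_range h31 v hv, G.existsUnique_red_edge_source h31 v hv⟩,
    fun e f he hf hre => ⟨?_, G.blue_into_source h31 he hf hre⟩⟩
  obtain ⟨f', hf', _⟩ := G.existsUnique_red_edge_range h31 (G.s e) (G.d_s e)
  exact ⟨f', hf'⟩
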